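/- Under the artificial target φ, the conditional distribution of the backward-trajectory indices j_{1:T} given {θ, X_{1:T}, I_{2:T}} is φ(j_{1:T} | θ, X_{1:T}, I_{2:T}) = (w_T^{j_T}/Σ_l w_T^l) ∏_{t=2}^T w_{t-1}^{j_{t-1}} f_θ(x_t^{j_t} | x_{t-1}^{j_{t-1}}) / (Σ_l w_{t-1}^l f_θ(x_t^{j_t} | x_{t-1}^l)); that is, it coincides with the law of the backward simulator applied to the particle system. -/

import Mathlib

open MeasureTheory Finset

/-! ### The PG-BSi construction (Lindsten–Schön).
Times are `0`-based: index `t : Fin T` is time `t+1` of the paper; ancestor indices for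
time `t ≥ 1` are stored at `I ⟨t-1, _⟩`.  Throughout, `mu0` is the initial density
`μ_θ(x_1)`, `g t x = g_θ(y_{t+1} | x)` (observations fixed), `f x xp = f_θ(x | xp)`,
`vadj t x = ν_t^θ(x, y_{t+2})` are the adjustment multipliers, and `R1`, `Rt` are the
proposal densities. -/

/-- The importance weight `w_t^m = W_t^θ(x_t^m, x_{t-1}^{i_t^m})` of the auxiliary
particle filter, with
`W_t^θ(x, xp) = g_θ(y_t|x) f_θ(x|xp) / (ν_{t-1}^θ(xp, y_t) R_t^θ(x|xp))` for `t ≥ 2`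
and `W_1^θ(x) = g_θ(y_1|x) μ_θ(x) / R_1^θ(x)`. -/
noncomputable def pgWgt {X : Type*} (N T : ℕ)
    (mu0 : X → ℝ) (g : ℕ → X → ℝ) (f : X → X → ℝ)
    (vadj : ℕ → X → ℝ) (R1 : X → ℝ) (Rt : ℕ → X → X → ℝ)
    (P : Fin T → Fin N → X) (I : Fin (T - 1) → Fin N → Fin N)
    (t : Fin T) (m : Fin N) : ℝ :=
  if h : 0 < t.val then
    g t.val (P t m) *
        f (P t m) (P ⟨t.val - 1, by have := t.isLt; omega⟩
          (I ⟨t.val - 1, by have := t.isLt; omega⟩ m)) /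
      (vadj (t.val - 1) (P ⟨t.val - 1, by have := t.isLt; omega⟩
          (I ⟨t.val - 1, by have := t.isLt; omega⟩ m)) *
        Rt t.val (P t m) (P ⟨t.val - 1, by have := t.isLt; omega⟩
          (I ⟨t.val - 1, by have := t.isLt; omega⟩ m)))
  else g 0 (P t m) * mu0 (P t m) / R1 (P t m)

/-- The APF proposal kernel density
`M_t^θ(i, x) = (w_{t-1}^i ν_{t-1}^i / ∑_l w_{t-1}^l ν_{t-1}^l) R_t^θ(x | x_{t-1}^i)`
(for `0 < t.val`; the value at `t = 0` is irrelevant and set to `0`). -/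
noncomputable def pgM {X : Type*} (N T : ℕ)
    (mu0 : X → ℝ) (g : ℕ → X → ℝ) (f : X → X → ℝ)
    (vadj : ℕ → X → ℝ) (R1 : X → ℝ) (Rt : ℕ → X → X → ℝ)
    (P : Fin T → Fin N → X) (I : Fin (T - 1) → Fin N → Fin N)
    (t : Fin T) (i : Fin N) (x : X) : ℝ :=
  if h : 0 < t.val then
    (pgWgt N T mu0 g f vadj R1 Rt P I ⟨t.val - 1, by have := t.isLt; omega⟩ i *
          vadj (t.val - 1) (P ⟨t.val - 1, by have := t.isLt; omega⟩ i) /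
        ∑ l, pgWgt N T mu0 g f vadj R1 Rt P I ⟨t.val - 1, by have := t.isLt; omega⟩ l *
          vadj (t.val - 1) (P ⟨t.val - 1, by have := t.isLt; omega⟩ l)) *
      Rt t.val x (P ⟨t.val - 1, by have := t.isLt; omega⟩ i)
  else 0

/-- The joint density `ψ^θ(X_{1:T}, I_{2:T}) = ∏_l R_1^θ(x_1^l) ∏_{t=2}^T ∏_m M_t^θ(i_t^m, x_t^m)`
of all variables generated by the auxiliary particle filter. -/
noncomputable def pgPsi {X : Type*} (N T : ℕ) (hT : 1 ≤ T)
    (mu0 : X → ℝ) (g : ℕ → X → ℝ) (f : X → X → ℝ)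
    (vadj : ℕ → X → ℝ) (R1 : X → ℝ) (Rt : ℕ → X → X → ℝ)
    (P : Fin T → Fin N → X) (I : Fin (T - 1) → Fin N → Fin N) : ℝ :=
  (∏ l, R1 (P ⟨0, by omega⟩ l)) *
    ∏ t : Fin T,
      if h : 0 < t.val then
        ∏ m, pgM N T mu0 g f vadj R1 Rt P I t
          (I ⟨t.val - 1, by have := t.isLt; omega⟩ m) (P t m)
      else 1

/-- The backward-simulation factor
`w_{t-1}^{i_t^{j_t}} f_θ(x_t^{j_t} | x_{t-1}^{i_t^{j_t}}) / ∑_l w_{t-1}^l f_θ(x_t^{j_t} | x_{t-1}^l)`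
(for `0 < t.val`; equal to `1` at `t = 0`). -/
noncomputable def pgBwd {X : Type*} (N T : ℕ)
    (mu0 : X → ℝ) (g : ℕ → X → ℝ) (f : X → X → ℝ)
    (vadj : ℕ → X → ℝ) (R1 : X → ℝ) (Rt : ℕ → X → X → ℝ)
    (P : Fin T → Fin N → X) (I : Fin (T - 1) → Fin N → Fin N)
    (j : Fin T → Fin N) (t : Fin T) : ℝ :=
  if h : 0 < t.val then
    pgWgt N T mu0 g f vadj R1 Rt P I ⟨t.val - 1, by have := t.isLt; omega⟩
        (I ⟨t.val - 1, by have := t.isLt; omega⟩ (j t)) *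
      f (P t (j t)) (P ⟨t.val - 1, by have := t.isLt; omega⟩
        (I ⟨t.val - 1, by have := t.isLt; omega⟩ (j t))) /
      ∑ l, pgWgt N T mu0 g f vadj R1 Rt P I ⟨t.val - 1, by have := t.isLt; omega⟩ l *
        f (P t (j t)) (P ⟨t.val - 1, by have := t.isLt; omega⟩ l)
  else 1

/-- The artificial target density of the PG-BSi sampler (for a fixed parameter `θ`):
`φ(X_{1:T}, I_{2:T}, j_{1:T}) = [post(x_{1:T}^{j_{1:T}})/N^T] ·
[ψ^θ / (R_1^θ(x_1^{j_1}) ∏_{t=2}^T M_t^θ(i_t^{j_t}, x_t^{j_t}))] ·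
∏_{t=2}^T w_{t-1}^{i_t^{j_t}} f_θ(x_t^{j_t}|x_{t-1}^{i_t^{j_t}}) / ∑_l w_{t-1}^l f_θ(x_t^{j_t}|x_{t-1}^l)`,
where `post` is the joint posterior density `p(θ, x_{1:T} | y_{1:T})` as a function of the
state trajectory. -/
noncomputable def pgPhi {X : Type*} (N T : ℕ) (hT : 1 ≤ T)
    (post : (Fin T → X) → ℝ)
    (mu0 : X → ℝ) (g : ℕ → X → ℝ) (f : X → X → ℝ)
    (vadj : ℕ → X → ℝ) (R1 : X → ℝ) (Rt : ℕ → X → X → ℝ)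
    (P : Fin T → Fin N → X) (I : Fin (T - 1) → Fin N → Fin N)
    (j : Fin T → Fin N) : ℝ :=
  post (fun t => P t (j t)) / (N : ℝ) ^ T *
    (pgPsi N T hT mu0 g f vadj R1 Rt P I /
      (R1 (P ⟨0, by omega⟩ (j ⟨0, by omega⟩)) *
        ∏ t : Fin T,
          if h : 0 < t.val then
            pgM N T mu0 g f vadj R1 Rt P I t
              (I ⟨t.val - 1, by have := t.isLt; omega⟩ (j t)) (P t (j t))
          else 1)) *
    ∏ t : Fin T, pgBwd N T mu0 g f vadj R1 Rt P I j t


private lemma fin_prod_shift {M : Type*} [CommMonoid M] (n : ℕ) (h : Fin (n+1) → M) :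
    (∏ t : Fin (n+1), if _h : 0 < t.val then h ⟨t.val - 1, by omega⟩ else 1) * h (Fin.last n)
      = ∏ t : Fin (n+1), h t := by
  rw [Fin.prod_univ_succ, Fin.prod_univ_castSucc (f := h)]
  rw [dif_neg (by simp)]
  rw [one_mul]
  congr 1

private lemma markov_sum {N : ℕ} :
    ∀ (n : ℕ) (K : Fin n → Fin N → Fin N → ℝ) (u : Fin N → ℝ),
    (∀ t b, ∑ a, K t a b = 1) →
    ∑ j : Fin (n+1) → Fin N, u (j (Fin.last n)) * ∏ t : Fin n, K t (j t.castSucc) (j t.succ)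
      = ∑ a, u a := by
  intro n
  induction n with
  | zero =>
      intro K u _
      rw [← (Equiv.funUnique (Fin 1) (Fin N)).symm.sum_comp]
      simp
  | succ n ih =>
      intro K u hK
      rw [← (Fin.consEquiv (fun _ : Fin (n+2) => Fin N)).sum_comp]
      rw [Fintype.sum_prod_type]
      have hstep : ∀ (x0 : Fin N) (q : Fin (n+1) → Fin N),
          u ((Fin.consEquiv (fun _ : Fin (n+2) => Fin N)) (x0, q) (Fin.last (n+1))) *
            ∏ t : Fin (n+1), K t ((Fin.consEquiv (fun _ : Fin (n+2) => Fin N)) (x0, q) t.castSucc)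
              ((Fin.consEquiv (fun _ : Fin (n+2) => Fin N)) (x0, q) t.succ)
          = K 0 x0 (q 0) * (u (q (Fin.last n)) *
              ∏ t : Fin n, K t.succ (q t.castSucc) (q t.succ)) := by
        intro x0 q
        simp only [Fin.consEquiv_apply]
        rw [Fin.prod_univ_succ]
        have h1 : (Fin.cons x0 q : Fin (n+2) → Fin N) (Fin.last (n+1)) = q (Fin.last n) := by
          rw [← Fin.succ_last, Fin.cons_succ]
        have h2 : ∀ t : Fin n, (Fin.cons x0 q : Fin (n+2) → Fin N) t.succ.castSucc = q t.castSucc := by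
          intro t; rw [← Fin.succ_castSucc, Fin.cons_succ]
        have h3 : ∀ t : Fin n, (Fin.cons x0 q : Fin (n+2) → Fin N) t.succ.succ = q t.succ := by
          intro t; rw [Fin.cons_succ]
        rw [h1]
        simp only [h2, h3, Fin.castSucc_zero, Fin.cons_zero, Fin.succ_zero_eq_one]
        have h4 : (Fin.cons x0 q : Fin (n+2) → Fin N) 1 = q 0 := by
          rw [show (1 : Fin (n+2)) = Fin.succ 0 from rfl, Fin.cons_succ]
        rw [h4]; ring
      simp only [hstep]
      rw [Finset.sum_comm]
      have hcol : ∀ q : Fin (n+1) → Fin N,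
          ∑ x0 : Fin N, K 0 x0 (q 0) * (u (q (Fin.last n)) * ∏ t : Fin n, K t.succ (q t.castSucc) (q t.succ))
          = u (q (Fin.last n)) * ∏ t : Fin n, K t.succ (q t.castSucc) (q t.succ) := by
        intro q
        rw [← Finset.sum_mul, hK 0 (q 0), one_mul]
      simp only [hcol]
      exact ih (fun t => K t.succ) u (fun t b => hK t.succ b)


private lemma pg_assemble (A G psi FJ GP T3 T4 T5 T6 T7 T8 WL S' Z Nn R : ℝ)
    (hkey : GP * (FJ * T3) = T4 * (T5 * (T6 * T7)))
    (hWL : WL * T8 = G * A / R * T6)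
    (hZ : Z ≠ 0) (hNn : Nn ≠ 0) (hR : R ≠ 0) (hT4 : T4 ≠ 0) (hS' : S' ≠ 0) :
    A * FJ * (G * GP) / Z / Nn * (psi / (R * T4)) * T3
      = psi * T5 * S' / (Z * Nn) * ((WL / S') * (T8 * T7)) := by
  have h1 : A * FJ * (G * GP) / Z / Nn * (psi / (R * T4)) * T3
      = (A * G * psi) * (GP * (FJ * T3)) / (Z * Nn * R * T4) := by ring
  have h3 : psi * T5 * S' / (Z * Nn) * ((WL / S') * (T8 * T7))
      = psi * T5 * S' / (Z * Nn) * ((WL * T8) * T7 / S') := by ring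
  rw [h1, hkey, h3, hWL]
  field_simp

/-- **Proposition 3: the conditional of `j_{1:T}` under `φ` is the backward-simulator law.**
With the joint posterior density of the trajectory given concretely (up to the positive
normalizing constant `Z`) by
`post z = μ_θ(x_1) ∏_{t=2}^T f_θ(x_t|x_{t-1}) ∏_{t=1}^T g_θ(y_t|x_t) / Z`,
the conditional distribution of `j_{1:T}` given the particle system `{X_{1:T}, I_{2:T}}`
under the artificial target `φ`, i.e. `φ(·)/∑_{j'} φ(·)`, coincides with the law of the
backward simulator:
`(w_T^{j_T}/∑_l w_T^l) ∏_{t=2}^T w_{t-1}^{j_{t-1}} f_θ(x_t^{j_t}|x_{t-1}^{j_{t-1}}) /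
(∑_l w_{t-1}^l f_θ(x_t^{j_t}|x_{t-1}^l))`. -/
theorem pgbsi_conditional_is_backward_simulator
    {X : Type*}
    (N T : ℕ) (hN : 1 ≤ N) (hT : 1 ≤ T)
    (mu0 : X → ℝ) (g : ℕ → X → ℝ) (f : X → X → ℝ)
    (vadj : ℕ → X → ℝ) (R1 : X → ℝ) (Rt : ℕ → X → X → ℝ)
    -- positivity of all the densities involved
    (hmu0p : ∀ x, 0 < mu0 x) (hgp : ∀ t x, 0 < g t x) (hfp : ∀ a b, 0 < f a b)
    (hvp : ∀ t x, 0 < vadj t x) (hR1p : ∀ x, 0 < R1 x) (hRtp : ∀ t a b, 0 < Rt t a b)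
    (Z : ℝ) (hZ : 0 < Z)
    (post : (Fin T → X) → ℝ)
    (hpost : ∀ z : Fin T → X,
      post z = (mu0 (z ⟨0, by omega⟩) *
          (∏ t : Fin T, if h : 0 < t.val then
              f (z t) (z ⟨t.val - 1, by have := t.isLt; omega⟩) else 1) *
          ∏ t : Fin T, g t.val (z t)) / Z)
    (P : Fin T → Fin N → X) (I : Fin (T - 1) → Fin N → Fin N)
    (j : Fin T → Fin N) :
    pgPhi N T hT post mu0 g f vadj R1 Rt P I j /
        (∑ j' : Fin T → Fin N, pgPhi N T hT post mu0 g f vadj R1 Rt P I j')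
      = (pgWgt N T mu0 g f vadj R1 Rt P I ⟨T - 1, by omega⟩ (j ⟨T - 1, by omega⟩) /
          ∑ l, pgWgt N T mu0 g f vadj R1 Rt P I ⟨T - 1, by omega⟩ l) *
        ∏ t : Fin T,
          if h : 0 < t.val then
            pgWgt N T mu0 g f vadj R1 Rt P I ⟨t.val - 1, by have := t.isLt; omega⟩
                (j ⟨t.val - 1, by have := t.isLt; omega⟩) *
              f (P t (j t)) (P ⟨t.val - 1, by have := t.isLt; omega⟩
                (j ⟨t.val - 1, by have := t.isLt; omega⟩)) /
              ∑ l, pgWgt N T mu0 g f vadj R1 Rt P I ⟨t.val - 1, by have := t.isLt; omega⟩ l *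
                f (P t (j t)) (P ⟨t.val - 1, by have := t.isLt; omega⟩ l)
          else 1 := by
  obtain ⟨n, rfl⟩ : ∃ n, T = n + 1 := ⟨T - 1, by omega⟩
  haveI : NeZero N := ⟨by omega⟩
  set w : Fin (n+1) → Fin N → ℝ := pgWgt N (n+1) mu0 g f vadj R1 Rt P I with hw
  have hwp : ∀ (t : Fin (n+1)) (m : Fin N), 0 < w t m := by
    intro t m
    rw [hw]
    rw [pgWgt]
    split
    · exact div_pos (mul_pos (hgp _ _) (hfp _ _)) (mul_pos (hvp _ _) (hRtp _ _ _))
    · exact div_pos (mul_pos (hgp _ _) (hmu0p _)) (hR1p _)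
  have huniv : (Finset.univ : Finset (Fin N)).Nonempty := Finset.univ_nonempty
  have hDpos : ∀ (tc : Fin (n+1)) (x : X), 0 < ∑ l, w tc l * f x (P tc l) :=
    fun tc x => Finset.sum_pos (fun l _ => mul_pos (hwp tc l) (hfp _ _)) huniv
  have hSpos : ∀ (tc : Fin (n+1)) (k : ℕ), 0 < ∑ l, w tc l * vadj k (P tc l) :=
    fun tc k => Finset.sum_pos (fun l _ => mul_pos (hwp tc l) (hvp _ _)) huniv
  have hS'pos : 0 < ∑ l, w (Fin.last n) l := Finset.sum_pos (fun l _ => hwp _ l) huniv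
  have hMp : ∀ (t : Fin (n+1)), 0 < t.val → ∀ (i : Fin N) (x : X),
      0 < pgM N (n+1) mu0 g f vadj R1 Rt P I t i x := by
    intro t ht i x
    rw [pgM, dif_pos ht]
    rw [← hw]
    exact mul_pos (div_pos (mul_pos (hwp _ _) (hvp _ _)) (hSpos _ _)) (hRtp _ _ _)
  have hpsip : 0 < pgPsi N (n+1) hT mu0 g f vadj R1 Rt P I := by
    rw [pgPsi]
    refine mul_pos (Finset.prod_pos fun l _ => hR1p _) (Finset.prod_pos fun t _ => ?_)
    split
    · exact Finset.prod_pos fun m _ => hMp t (by assumption) _ _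
    · exact one_pos
  have hphi : ∀ j' : Fin (n+1) → Fin N,
      pgPhi N (n+1) hT post mu0 g f vadj R1 Rt P I j' =
      (pgPsi N (n+1) hT mu0 g f vadj R1 Rt P I *
          (∏ t : Fin n, ∑ l, w t.castSucc l * vadj t.val (P t.castSucc l)) *
          (∑ l, w (Fin.last n) l) / (Z * (N:ℝ)^(n+1))) *
        ((w (Fin.last n) (j' (Fin.last n)) / ∑ l, w (Fin.last n) l) *
          ∏ t : Fin (n+1),
            if h : 0 < t.val then
              w ⟨t.val - 1, by have := t.isLt; omega⟩ (j' ⟨t.val - 1, by have := t.isLt; omega⟩) *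
                f (P t (j' t)) (P ⟨t.val - 1, by have := t.isLt; omega⟩
                  (j' ⟨t.val - 1, by have := t.isLt; omega⟩)) /
                ∑ l, w ⟨t.val - 1, by have := t.isLt; omega⟩ l *
                  f (P t (j' t)) (P ⟨t.val - 1, by have := t.isLt; omega⟩ l)
            else 1) := by
    intro j'
    have hfj : (∏ t : Fin (n+1), if h : 0 < t.val then
          f (P t (j' t)) (P ⟨t.val - 1, by have := t.isLt; omega⟩
            (j' ⟨t.val - 1, by have := t.isLt; omega⟩)) else 1)
        = ∏ t : Fin n, f (P t.succ (j' t.succ)) (P t.castSucc (j' t.castSucc)) := by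
      rw [Fin.prod_univ_succ, dif_neg (by simp), one_mul]
      refine Finset.prod_congr rfl fun t _ => ?_
      rw [dif_pos (by simp)]
      rfl
    have hg : (∏ t : Fin (n+1), g t.val (P t (j' t)))
        = g 0 (P 0 (j' 0)) * ∏ t : Fin n, g (t.val+1) (P t.succ (j' t.succ)) := by
      rw [Fin.prod_univ_succ]
      rfl
    have hBw : (∏ t : Fin (n+1), pgBwd N (n+1) mu0 g f vadj R1 Rt P I j' t)
        = ∏ t : Fin n, w t.castSucc (I t (j' t.succ)) *
            f (P t.succ (j' t.succ)) (P t.castSucc (I t (j' t.succ))) /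
            ∑ l, w t.castSucc l * f (P t.succ (j' t.succ)) (P t.castSucc l) := by
      rw [Fin.prod_univ_succ]
      rw [show pgBwd N (n+1) mu0 g f vadj R1 Rt P I j' 0 = 1 from by
        rw [pgBwd, dif_neg (by simp)]]
      rw [one_mul]
      refine Finset.prod_congr rfl fun t _ => ?_
      rw [pgBwd, dif_pos (by simp), ← hw]
      rfl
    have hM : (∏ t : Fin (n+1), if h : 0 < t.val then
          pgM N (n+1) mu0 g f vadj R1 Rt P I t
            (I ⟨t.val - 1, by have := t.isLt; omega⟩ (j' t)) (P t (j' t)) else 1)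
        = ∏ t : Fin n, w t.castSucc (I t (j' t.succ)) *
            vadj t.val (P t.castSucc (I t (j' t.succ))) /
            (∑ l, w t.castSucc l * vadj t.val (P t.castSucc l)) *
            Rt (t.val+1) (P t.succ (j' t.succ)) (P t.castSucc (I t (j' t.succ))) := by
      rw [Fin.prod_univ_succ, dif_neg (by simp), one_mul]
      refine Finset.prod_congr rfl fun t _ => ?_
      rw [dif_pos (by simp), pgM, dif_pos (by simp), ← hw]
      rfl
    have hB : (∏ t : Fin (n+1),
          if h : 0 < t.val then
            w ⟨t.val - 1, by have := t.isLt; omega⟩ (j' ⟨t.val - 1, by have := t.isLt; omega⟩) *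
              f (P t (j' t)) (P ⟨t.val - 1, by have := t.isLt; omega⟩
                (j' ⟨t.val - 1, by have := t.isLt; omega⟩)) /
              ∑ l, w ⟨t.val - 1, by have := t.isLt; omega⟩ l *
                f (P t (j' t)) (P ⟨t.val - 1, by have := t.isLt; omega⟩ l)
          else 1)
        = (∏ t : Fin n, w t.castSucc (j' t.castSucc)) *
          ∏ t : Fin n, f (P t.succ (j' t.succ)) (P t.castSucc (j' t.castSucc)) /
            ∑ l, w t.castSucc l * f (P t.succ (j' t.succ)) (P t.castSucc l) := by
      rw [Fin.prod_univ_succ, dif_neg (by simp), one_mul, ← Finset.prod_mul_distrib]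
      refine Finset.prod_congr rfl fun t _ => ?_
      rw [dif_pos (by simp), mul_div_assoc]
      rfl
    have hwall : (∏ t : Fin (n+1), w t (j' t))
        = g 0 (P 0 (j' 0)) * mu0 (P 0 (j' 0)) / R1 (P 0 (j' 0)) *
          ∏ t : Fin n, g (t.val+1) (P t.succ (j' t.succ)) *
            f (P t.succ (j' t.succ)) (P t.castSucc (I t (j' t.succ))) /
            (vadj t.val (P t.castSucc (I t (j' t.succ))) *
              Rt (t.val+1) (P t.succ (j' t.succ)) (P t.castSucc (I t (j' t.succ)))) := by
      rw [Fin.prod_univ_succ]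
      have h0 : w 0 (j' 0) = g 0 (P 0 (j' 0)) * mu0 (P 0 (j' 0)) / R1 (P 0 (j' 0)) := by
        rw [hw, pgWgt, dif_neg (by simp)]
      rw [h0]
      refine congrArg _ (Finset.prod_congr rfl fun t _ => ?_)
      conv_lhs => rw [hw, pgWgt]
      rw [dif_pos (by simp)]
      rfl
    have hWL : w (Fin.last n) (j' (Fin.last n)) * ∏ t : Fin n, w t.castSucc (j' t.castSucc)
        = g 0 (P 0 (j' 0)) * mu0 (P 0 (j' 0)) / R1 (P 0 (j' 0)) *
          ∏ t : Fin n, g (t.val+1) (P t.succ (j' t.succ)) *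
            f (P t.succ (j' t.succ)) (P t.castSucc (I t (j' t.succ))) /
            (vadj t.val (P t.castSucc (I t (j' t.succ))) *
              Rt (t.val+1) (P t.succ (j' t.succ)) (P t.castSucc (I t (j' t.succ)))) := by
      rw [mul_comm, ← hwall, Fin.prod_univ_castSucc (f := fun t => w t (j' t))]
    have hkey : (∏ t : Fin n, g (t.val+1) (P t.succ (j' t.succ))) *
          ((∏ t : Fin n, f (P t.succ (j' t.succ)) (P t.castSucc (j' t.castSucc))) *
            (∏ t : Fin n, w t.castSucc (I t (j' t.succ)) *
              f (P t.succ (j' t.succ)) (P t.castSucc (I t (j' t.succ))) /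
              ∑ l, w t.castSucc l * f (P t.succ (j' t.succ)) (P t.castSucc l)))
        = (∏ t : Fin n, w t.castSucc (I t (j' t.succ)) *
            vadj t.val (P t.castSucc (I t (j' t.succ))) /
            (∑ l, w t.castSucc l * vadj t.val (P t.castSucc l)) *
            Rt (t.val+1) (P t.succ (j' t.succ)) (P t.castSucc (I t (j' t.succ)))) *
          ((∏ t : Fin n, ∑ l, w t.castSucc l * vadj t.val (P t.castSucc l)) *
            ((∏ t : Fin n, g (t.val+1) (P t.succ (j' t.succ)) *
              f (P t.succ (j' t.succ)) (P t.castSucc (I t (j' t.succ))) /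
              (vadj t.val (P t.castSucc (I t (j' t.succ))) *
                Rt (t.val+1) (P t.succ (j' t.succ)) (P t.castSucc (I t (j' t.succ))))) *
              (∏ t : Fin n, f (P t.succ (j' t.succ)) (P t.castSucc (j' t.castSucc)) /
                ∑ l, w t.castSucc l * f (P t.succ (j' t.succ)) (P t.castSucc l)))) := by
      rw [← Finset.prod_mul_distrib, ← Finset.prod_mul_distrib, ← Finset.prod_mul_distrib,
        ← Finset.prod_mul_distrib, ← Finset.prod_mul_distrib]
      refine Finset.prod_congr rfl fun t _ => ?_
      have h1 : (0:ℝ) < ∑ l, w t.castSucc l * vadj t.val (P t.castSucc l) := hSpos _ _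
      have h2 : (0:ℝ) < ∑ l, w t.castSucc l * f (P t.succ (j' t.succ)) (P t.castSucc l) :=
        hDpos _ _
      have h3 : (0:ℝ) < vadj t.val (P t.castSucc (I t (j' t.succ))) := hvp _ _
      have h4 : (0:ℝ) < Rt (t.val+1) (P t.succ (j' t.succ)) (P t.castSucc (I t (j' t.succ))) :=
        hRtp _ _ _
      field_simp
    rw [pgPhi]
    rw [hpost]
    rw [hB]
    rw [hfj, hg, hBw, hM]
    have hne1 : Z ≠ 0 := ne_of_gt hZ
    have hne2 : ((N:ℝ))^(n+1) ≠ 0 := by positivity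
    have hne3 : R1 (P 0 (j' 0)) ≠ 0 := ne_of_gt (hR1p _)
    have hne4 : (∏ t : Fin n,
        (w t.castSucc (I t (j' t.succ)) * vadj t.val (P t.castSucc (I t (j' t.succ))) /
            ∑ l, w t.castSucc l * vadj t.val (P t.castSucc l)) *
          Rt (t.val+1) (P t.succ (j' t.succ)) (P t.castSucc (I t (j' t.succ)))) ≠ 0 :=
      ne_of_gt (Finset.prod_pos fun t _ =>
        mul_pos (div_pos (mul_pos (hwp _ _) (hvp _ _)) (hSpos _ _)) (hRtp _ _ _))
    have hne5 : (∑ l, w (Fin.last n) l) ≠ 0 := ne_of_gt hS'pos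
    exact pg_assemble _ _ _ _ _ _ _ _ _ _ _ _ _ _ _ _ hkey hWL hne1 hne2 hne3 hne4 hne5
  have hBsum : (∑ j' : Fin (n+1) → Fin N,
      (w (Fin.last n) (j' (Fin.last n)) / ∑ l, w (Fin.last n) l) *
        ∏ t : Fin (n+1),
          if h : 0 < t.val then
            w ⟨t.val - 1, by have := t.isLt; omega⟩ (j' ⟨t.val - 1, by have := t.isLt; omega⟩) *
              f (P t (j' t)) (P ⟨t.val - 1, by have := t.isLt; omega⟩
                (j' ⟨t.val - 1, by have := t.isLt; omega⟩)) /
              ∑ l, w ⟨t.val - 1, by have := t.isLt; omega⟩ l *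
                f (P t (j' t)) (P ⟨t.val - 1, by have := t.isLt; omega⟩ l)
          else 1) = 1 := by
    have hconv : ∀ j' : Fin (n+1) → Fin N,
        (∏ t : Fin (n+1),
          if h : 0 < t.val then
            w ⟨t.val - 1, by have := t.isLt; omega⟩ (j' ⟨t.val - 1, by have := t.isLt; omega⟩) *
              f (P t (j' t)) (P ⟨t.val - 1, by have := t.isLt; omega⟩
                (j' ⟨t.val - 1, by have := t.isLt; omega⟩)) /
              ∑ l, w ⟨t.val - 1, by have := t.isLt; omega⟩ l *
                f (P t (j' t)) (P ⟨t.val - 1, by have := t.isLt; omega⟩ l)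
          else 1)
        = ∏ t : Fin n, w t.castSucc (j' t.castSucc) *
            f (P t.succ (j' t.succ)) (P t.castSucc (j' t.castSucc)) /
            ∑ l, w t.castSucc l * f (P t.succ (j' t.succ)) (P t.castSucc l) := by
      intro j'
      rw [Fin.prod_univ_succ, dif_neg (by simp), one_mul]
      refine Finset.prod_congr rfl fun t _ => ?_
      rw [dif_pos (by simp)]
      rfl
    simp only [hconv]
    have hK : ∀ (t : Fin n) (b : Fin N),
        ∑ a, w t.castSucc a * f (P t.succ b) (P t.castSucc a) /
          ∑ l, w t.castSucc l * f (P t.succ b) (P t.castSucc l) = 1 := by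
      intro t b
      rw [← Finset.sum_div, div_self (ne_of_gt (hDpos _ _))]
    have hms := markov_sum n
      (fun t a b => w t.castSucc a * f (P t.succ b) (P t.castSucc a) /
        ∑ l, w t.castSucc l * f (P t.succ b) (P t.castSucc l))
      (fun a => w (Fin.last n) a / ∑ l, w (Fin.last n) l) hK
    rw [hms, ← Finset.sum_div, div_self (ne_of_gt hS'pos)]
  have hC : (pgPsi N (n+1) hT mu0 g f vadj R1 Rt P I *
      (∏ t : Fin n, ∑ l, w t.castSucc l * vadj t.val (P t.castSucc l)) *
      (∑ l, w (Fin.last n) l) / (Z * (N:ℝ)^(n+1))) ≠ 0 :=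
    ne_of_gt (div_pos (mul_pos (mul_pos hpsip (Finset.prod_pos fun t _ => hSpos _ _)) hS'pos)
      (mul_pos hZ (by positivity)))
  rw [hphi j, Finset.sum_congr rfl fun j' _ => hphi j', ← Finset.mul_sum, hBsum, mul_one,
    mul_div_cancel_left₀ _ hC]
  rfl
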